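/- arXiv:2605.30558 — 4 statements merged into one kernel-verified Lean document; each statement's English description precedes it below -/
import Mathlib

section
/- Homological perturbation lemma: let (i, p, K) be a strong deformation retraction from (V, d) onto (V', d') satisfying the side conditions K² = 0, K∘i = 0, p∘K = 0, and let δ : V → V be a degree +1 map with (d + δ)² = 0 such that δ∘K is locally nilpotent (so that Σ_{k≥0} (-δK)^k converges, e.g. (δK)^N = 0 for some N). Then setting d̃' = d' + Σ_{k≥0} p(-δK)^k δ i, ĩ = Σ_{k≥0}(-Kδ)^k i, p̃ = Σ_{k≥0} p(-δK)^k, K̃ = Σ_{k≥0} K(-δK)^k, one has: (d̃')² = 0, ĩ and p̃ are chain maps for the differentials d+δ and d̃', p̃∘ĩ = id, (d+δ)K̃ + K̃(d+δ) = id - ĩ∘p̃, and the side conditions K̃² = 0, K̃∘ĩ = 0, p̃∘K̃ = 0 hold. -/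
/-- the homological perturbation lemma.  Given a strong deformation
retraction `(i, p, K)` from `(V, d)` onto `(V', d')` with side conditions, and a
perturbation `δ` of the differential with `(d + δ)² = 0` and `(δ∘K)^N = 0` (so that the
geometric series terminate), the perturbed data `(ĩ, p̃, K̃)` and the perturbed
differential `d̃'` again form a strong deformation retraction with side conditions. -/
theorem homological_perturbation_lemma
    {R V V' : Type*} [Field R] [AddCommGroup V] [Module R V]
    [AddCommGroup V'] [Module R V']
    (d : V →ₗ[R] V) (d' : V' →ₗ[R] V')
    (i : V' →ₗ[R] V) (p : V →ₗ[R] V') (K : V →ₗ[R] V)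
    (hd : d ∘ₗ d = 0) (hd' : d' ∘ₗ d' = 0)
    (hi : d ∘ₗ i = i ∘ₗ d') (hp : d' ∘ₗ p = p ∘ₗ d)
    (hpi : p ∘ₗ i = LinearMap.id)
    (hK : d ∘ₗ K + K ∘ₗ d = LinearMap.id - i ∘ₗ p)
    (hKK : K ∘ₗ K = 0) (hKi : K ∘ₗ i = 0) (hpK : p ∘ₗ K = 0)
    (δ : V →ₗ[R] V) (hδ : (d + δ) ∘ₗ (d + δ) = 0)
    (N : ℕ) (hN : (δ ∘ₗ K) ^ N = 0) :
    let d'new : V' →ₗ[R] V' :=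
      d' + ∑ k ∈ Finset.range (N + 1), p ∘ₗ ((-(δ ∘ₗ K)) ^ k) ∘ₗ δ ∘ₗ i
    let inew : V' →ₗ[R] V :=
      ∑ k ∈ Finset.range (N + 1), ((-(K ∘ₗ δ)) ^ k) ∘ₗ i
    let pnew : V →ₗ[R] V' :=
      ∑ k ∈ Finset.range (N + 1), p ∘ₗ ((-(δ ∘ₗ K)) ^ k)
    let Knew : V →ₗ[R] V :=
      ∑ k ∈ Finset.range (N + 1), K ∘ₗ ((-(δ ∘ₗ K)) ^ k)
    d'new ∘ₗ d'new = 0 ∧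
    (d + δ) ∘ₗ inew = inew ∘ₗ d'new ∧
    d'new ∘ₗ pnew = pnew ∘ₗ (d + δ) ∧
    pnew ∘ₗ inew = LinearMap.id ∧
    (d + δ) ∘ₗ Knew + Knew ∘ₗ (d + δ) = LinearMap.id - inew ∘ₗ pnew ∧
    Knew ∘ₗ Knew = 0 ∧ Knew ∘ₗ inew = 0 ∧ pnew ∘ₗ Knew = 0 := by
  intro d'new inew pnew Knew
  -- move to the endomorphism ring
  set X : Module.End R V := -(δ * K) with hXdef
  set Y : Module.End R V := -(K * δ) with hYdef
  set a : Module.End R V := ∑ k ∈ Finset.range (N + 1), X ^ k with hadef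
  set b : Module.End R V := ∑ k ∈ Finset.range (N + 1), Y ^ k with hbdef
  have hXc : -(δ ∘ₗ K) = X := rfl
  have hYc : -(K ∘ₗ δ) = Y := rfl
  -- given hypotheses in ring form
  have hd0 : d * d = 0 := hd
  have hd'0 : d' * d' = 0 := hd'
  have hKK' : K * K = 0 := hKK
  have hK' : d * K + K * d = 1 - i ∘ₗ p := hK
  have hN' : (δ * K) ^ N = 0 := hN
  have hδ' : (d + δ) * (d + δ) = 0 := hδ
  have hdδ : d * δ + δ * d + δ * δ = 0 := by
    calc d * δ + δ * d + δ * δ = (d + δ) * (d + δ) - d * d := by noncomm_ring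
    _ = 0 := by rw [hδ', hd0, sub_zero]
  have hdK : d * K = 1 - i ∘ₗ p - K * d := by
    calc d * K = (d * K + K * d) - K * d := by noncomm_ring
    _ = 1 - i ∘ₗ p - K * d := by rw [hK']
  have hKd : K * d = 1 - i ∘ₗ p - d * K := by
    calc K * d = (d * K + K * d) - d * K := by noncomm_ring
    _ = 1 - i ∘ₗ p - d * K := by rw [hK']
  -- nilpotence
  have hXN : X ^ (N + 1) = 0 := by
    have h0 : X ^ N = 0 := by
      rw [hXdef, neg_pow, hN', mul_zero]
    rw [pow_succ, h0, zero_mul]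
  have hYN : Y ^ (N + 1) = 0 := by
    have hsc : SemiconjBy K (δ * K) (K * δ) := (mul_assoc K δ K).symm
    have h1 : (K * δ) ^ N * K = K * (δ * K) ^ N := (hsc.pow_right N).symm
    have h2 : (K * δ) ^ (N + 1) = 0 := by
      rw [pow_succ, ← mul_assoc, h1, hN', mul_zero, zero_mul]
    rw [hYdef, neg_pow, h2, mul_zero]
  -- geometric series inverses
  have haR : a * (1 - X) = 1 := by
    have h := geom_sum_mul X (N + 1)
    rw [hXN] at h
    calc a * (1 - X) = -(a * (X - 1)) := by noncomm_ring
    _ = -((∑ k ∈ Finset.range (N + 1), X ^ k) * (X - 1)) := by rw [hadef]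
    _ = 1 := by rw [h]; simp
  have haL : (1 - X) * a = 1 := by
    have h := mul_geom_sum X (N + 1)
    rw [hXN] at h
    calc (1 - X) * a = -((X - 1) * a) := by noncomm_ring
    _ = -((X - 1) * ∑ k ∈ Finset.range (N + 1), X ^ k) := by rw [hadef]
    _ = 1 := by rw [h]; simp
  have hbR : b * (1 - Y) = 1 := by
    have h := geom_sum_mul Y (N + 1)
    rw [hYN] at h
    calc b * (1 - Y) = -(b * (Y - 1)) := by noncomm_ring
    _ = -((∑ k ∈ Finset.range (N + 1), Y ^ k) * (Y - 1)) := by rw [hbdef]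
    _ = 1 := by rw [h]; simp
  have hbL : (1 - Y) * b = 1 := by
    have h := mul_geom_sum Y (N + 1)
    rw [hYN] at h
    calc (1 - Y) * b = -((Y - 1) * b) := by noncomm_ring
    _ = -((Y - 1) * ∑ k ∈ Finset.range (N + 1), Y ^ k) := by rw [hbdef]
    _ = 1 := by rw [h]; simp
  -- core relations
  have h1 : a * (δ * K) = 1 - a := by
    calc a * (δ * K) = a * (1 - X) - a := by rw [hXdef]; noncomm_ring
    _ = 1 - a := by rw [haR]
  have h2 : (δ * K) * a = 1 - a := by
    calc (δ * K) * a = (1 - X) * a - a := by rw [hXdef]; noncomm_ring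
    _ = 1 - a := by rw [haL]
  have h3 : b * (K * δ) = 1 - b := by
    calc b * (K * δ) = b * (1 - Y) - b := by rw [hYdef]; noncomm_ring
    _ = 1 - b := by rw [hbR]
  have h4 : (K * δ) * b = 1 - b := by
    calc (K * δ) * b = (1 - Y) * b - b := by rw [hYdef]; noncomm_ring
    _ = 1 - b := by rw [hbL]
  -- semiconjugation
  have hKa : K * a = b * K := by
    have hsc : SemiconjBy K X Y := by
      rw [hXdef, hYdef]; unfold SemiconjBy; noncomm_ring
    rw [hadef, hbdef, Finset.mul_sum, Finset.sum_mul]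
    exact Finset.sum_congr rfl fun k _ => (hsc.pow_right k)
  have hab : a * δ = δ * b := by
    have hsc : SemiconjBy δ Y X := by
      rw [hXdef, hYdef]; unfold SemiconjBy; noncomm_ring
    rw [hadef, hbdef, Finset.mul_sum, Finset.sum_mul]
    exact (Finset.sum_congr rfl fun k _ => (hsc.pow_right k)).symm
  -- absorption relations
  have m3 : a * K = K := by
    have e1 : (a * (δ * K)) * K = (1 - a) * K := by rw [h1]
    have e2 : (a * (δ * K)) * K = 0 := by
      calc (a * (δ * K)) * K = (a * δ) * (K * K) := by noncomm_ring
      _ = 0 := by rw [hKK', mul_zero]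
    have e3 : (1 - a) * K = 0 := by rw [← e1]; exact e2
    calc a * K = K - (1 - a) * K := by noncomm_ring
    _ = K := by rw [e3, sub_zero]
  have m4 : K * b = K := by
    have e1 : K * ((K * δ) * b) = K * (1 - b) := by rw [h4]
    have e2 : K * ((K * δ) * b) = 0 := by
      calc K * ((K * δ) * b) = (K * K) * (δ * b) := by noncomm_ring
      _ = 0 := by rw [hKK', zero_mul]
    have e3 : K * (1 - b) = 0 := by rw [← e1]; exact e2
    calc K * b = K - K * (1 - b) := by noncomm_ring
    _ = K := by rw [e3, sub_zero]
  -- mixed relations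
  have m1 : a ∘ₗ i = i := by
    have ha' : a = 1 - (a * δ) * K := by
      calc a = 1 - a * (δ * K) := by rw [h1]; noncomm_ring
      _ = 1 - (a * δ) * K := by rw [mul_assoc]
    rw [ha']
    simp [LinearMap.sub_comp, Module.End.mul_eq_comp, LinearMap.comp_assoc, hKi,
      Module.End.one_eq_id]
  have m2 : p ∘ₗ b = p := by
    have hb' : b = 1 - K * (δ * b) := by
      calc b = 1 - (K * δ) * b := by rw [h4]; noncomm_ring
      _ = 1 - K * (δ * b) := by rw [mul_assoc]
    rw [hb']
    simp [LinearMap.comp_sub, Module.End.mul_eq_comp, ← LinearMap.comp_assoc, hpK,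
      Module.End.one_eq_id]
  -- inverse forms
  have hinvR : a * (1 + δ * K) = 1 := by
    have := haR; rw [hXdef, sub_neg_eq_add] at this; exact this
  have hbinvL : (1 + K * δ) * b = 1 := by
    have := hbL; rw [hYdef, sub_neg_eq_add] at this; exact this
  have hXa : X * a = a - 1 := by
    calc X * a = a - (1 - X) * a := by noncomm_ring
    _ = a - 1 := by rw [haL]
  have hbY : b * Y = b - 1 := by
    calc b * Y = b - b * (1 - Y) := by noncomm_ring
    _ = b - 1 := by rw [hbR]
  -- D1 : d * a = a * (d + δ) - δ * (b * ((i ∘ₗ p) * a))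
  have step1 : d * a = (d + δ) - δ * ((i ∘ₗ p) * a) - (δ * K) * (d * a) := by
    have t1 : d * a = d - (d * δ) * (K * a) := by
      calc d * a = d + d * (X * a) := by rw [hXa]; noncomm_ring
      _ = d - (d * δ) * (K * a) := by rw [hXdef]; noncomm_ring
    have t2 : d * δ = -(δ * d) - δ * δ := by
      calc d * δ = (d * δ + δ * d + δ * δ) - δ * d - δ * δ := by noncomm_ring
      _ = -(δ * d) - δ * δ := by rw [hdδ]; noncomm_ring
    calc d * a = d - (d * δ) * (K * a) := t1
    _ = d - (-(δ * d) - δ * δ) * (K * a) := by rw [t2]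
    _ = d + δ * ((d * K) * a) + δ * ((δ * K) * a) := by noncomm_ring
    _ = d + δ * ((1 - i ∘ₗ p - K * d) * a) + δ * (1 - a) := by rw [hdK, h2]
    _ = (d + δ) - δ * ((i ∘ₗ p) * a) - (δ * K) * (d * a) := by noncomm_ring
  have keyD1 : (1 + δ * K) * (d * a) = (d + δ) - δ * ((i ∘ₗ p) * a) := by
    rw [add_mul, one_mul]
    nth_rewrite 1 [step1]
    noncomm_ring
  have D1 : d * a = a * (d + δ) - δ * (b * ((i ∘ₗ p) * a)) := by
    calc d * a = (a * (1 + δ * K)) * (d * a) := by rw [hinvR, one_mul]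
    _ = a * ((1 + δ * K) * (d * a)) := by rw [mul_assoc]
    _ = a * ((d + δ) - δ * ((i ∘ₗ p) * a)) := by rw [keyD1]
    _ = a * (d + δ) - (a * δ) * ((i ∘ₗ p) * a) := by noncomm_ring
    _ = a * (d + δ) - (δ * b) * ((i ∘ₗ p) * a) := by rw [hab]
    _ = a * (d + δ) - δ * (b * ((i ∘ₗ p) * a)) := by rw [mul_assoc]
  -- D2 : b * d = (d + δ) * b - b * ((i ∘ₗ p) * (δ * b))
  have step2 : b * d = (d + δ) - b * ((i ∘ₗ p) * δ) - (b * d) * (K * δ) := by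
    have t1 : b * d = d - (b * K) * (δ * d) := by
      calc b * d = d + (b * Y) * d := by rw [hbY]; noncomm_ring
      _ = d - (b * K) * (δ * d) := by rw [hYdef]; noncomm_ring
    have t2 : δ * d = -(d * δ) - δ * δ := by
      calc δ * d = (d * δ + δ * d + δ * δ) - d * δ - δ * δ := by noncomm_ring
      _ = -(d * δ) - δ * δ := by rw [hdδ]; noncomm_ring
    calc b * d = d - (b * K) * (δ * d) := t1
    _ = d - (b * K) * (-(d * δ) - δ * δ) := by rw [t2]
    _ = d + b * ((K * d) * δ) + (b * (K * δ)) * δ := by noncomm_ring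
    _ = d + b * ((1 - i ∘ₗ p - d * K) * δ) + (1 - b) * δ := by rw [hKd, h3]
    _ = (d + δ) - b * ((i ∘ₗ p) * δ) - (b * d) * (K * δ) := by noncomm_ring
  have keyD2 : (b * d) * (1 + K * δ) = (d + δ) - b * ((i ∘ₗ p) * δ) := by
    rw [mul_add, mul_one]
    nth_rewrite 1 [step2]
    noncomm_ring
  have D2 : b * d = (d + δ) * b - b * ((i ∘ₗ p) * (δ * b)) := by
    calc b * d = (b * d) * ((1 + K * δ) * b) := by rw [hbinvL, mul_one]
    _ = ((b * d) * (1 + K * δ)) * b := by noncomm_ring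
    _ = ((d + δ) - b * ((i ∘ₗ p) * δ)) * b := by rw [keyD2]
    _ = (d + δ) * b - b * ((i ∘ₗ p) * (δ * b)) := by noncomm_ring
  -- pieces for the homotopy identity
  have hδbK : (δ * b) * K = 1 - a := by
    rw [← hab]
    calc (a * δ) * K = a * (δ * K) := by rw [mul_assoc]
    _ = 1 - a := h1
  have bKd : (b * K) * d = b - (d + δ) * (b * K) - b * ((i ∘ₗ p) * a) := by
    calc (b * K) * d = b * (K * d) := by rw [mul_assoc]
    _ = b * (1 - i ∘ₗ p - d * K) := by rw [hKd]
    _ = b - b * (i ∘ₗ p) - (b * d) * K := by noncomm_ring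
    _ = b - b * (i ∘ₗ p) - ((d + δ) * b - b * ((i ∘ₗ p) * (δ * b))) * K := by rw [D2]
    _ = b - b * (i ∘ₗ p) - (d + δ) * (b * K) + b * ((i ∘ₗ p) * ((δ * b) * K)) := by
            noncomm_ring
    _ = b - b * (i ∘ₗ p) - (d + δ) * (b * K) + b * ((i ∘ₗ p) * (1 - a)) := by rw [hδbK]
    _ = b - (d + δ) * (b * K) - b * ((i ∘ₗ p) * a) := by noncomm_ring
  have bKe : (b * K) * (d + δ) = 1 - (d + δ) * (b * K) - b * ((i ∘ₗ p) * a) := by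
    calc (b * K) * (d + δ) = (b * K) * d + b * (K * δ) := by noncomm_ring
    _ = (b - (d + δ) * (b * K) - b * ((i ∘ₗ p) * a)) + (1 - b) := by rw [bKd, h3]
    _ = 1 - (d + δ) * (b * K) - b * ((i ∘ₗ p) * a) := by noncomm_ring
  have Kda : K * (d * a) = (b * K) * (d + δ) - (1 - b) * ((i ∘ₗ p) * a) := by
    rw [D1]
    calc K * (a * (d + δ) - δ * (b * ((i ∘ₗ p) * a)))
        = (K * a) * (d + δ) - ((K * δ) * b) * ((i ∘ₗ p) * a) := by noncomm_ring
    _ = (b * K) * (d + δ) - (1 - b) * ((i ∘ₗ p) * a) := by rw [hKa, h4]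
  have T1 : d * (K * a) = a - 1 + (d + δ) * (b * K) := by
    calc d * (K * a) = (d * K) * a := by rw [mul_assoc]
    _ = (1 - i ∘ₗ p - K * d) * a := by rw [hdK]
    _ = a - (i ∘ₗ p) * a - K * (d * a) := by noncomm_ring
    _ = a - (i ∘ₗ p) * a - ((b * K) * (d + δ) - (1 - b) * ((i ∘ₗ p) * a)) := by rw [Kda]
    _ = a - (i ∘ₗ p) * a
        - ((1 - (d + δ) * (b * K) - b * ((i ∘ₗ p) * a)) - (1 - b) * ((i ∘ₗ p) * a)) := by
            rw [bKe]
    _ = a - 1 + (d + δ) * (b * K) := by noncomm_ring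
  have G5core : (d + δ) * (K * a) + (K * a) * (d + δ) = 1 - b * ((i ∘ₗ p) * a) := by
    have e1 : (d + δ) * (K * a) = d * (K * a) + (1 - a) := by
      calc (d + δ) * (K * a) = d * (K * a) + (δ * K) * a := by noncomm_ring
      _ = d * (K * a) + (1 - a) := by rw [h2]
    have e2 : (K * a) * (d + δ) = (b * K) * (d + δ) := by rw [hKa]
    calc (d + δ) * (K * a) + (K * a) * (d + δ)
        = (d * (K * a) + (1 - a)) + (b * K) * (d + δ) := by rw [e1, e2]
    _ = ((a - 1 + (d + δ) * (b * K)) + (1 - a))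
        + (1 - (d + δ) * (b * K) - b * ((i ∘ₗ p) * a)) := by rw [T1, bKe]
    _ = 1 - b * ((i ∘ₗ p) * a) := by noncomm_ring
  -- collapse the sums
  have hpnew : pnew = p ∘ₗ a := by
    show (∑ k ∈ Finset.range (N + 1), p ∘ₗ ((-(δ ∘ₗ K)) ^ k)) = p ∘ₗ a
    simp only [hXc]
    rw [hadef]
    ext x
    simp [LinearMap.sum_apply, map_sum]
  have hinew : inew = b ∘ₗ i := by
    show (∑ k ∈ Finset.range (N + 1), ((-(K ∘ₗ δ)) ^ k) ∘ₗ i) = b ∘ₗ i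
    simp only [hYc]
    rw [hbdef]
    ext x
    simp [LinearMap.sum_apply]
  have hKnew : Knew = K ∘ₗ a := by
    show (∑ k ∈ Finset.range (N + 1), K ∘ₗ ((-(δ ∘ₗ K)) ^ k)) = K ∘ₗ a
    simp only [hXc]
    rw [hadef]
    ext x
    simp [LinearMap.sum_apply, map_sum]
  have hdnew : d'new = d' + p ∘ₗ ((a * δ) ∘ₗ i) := by
    show (d' + ∑ k ∈ Finset.range (N + 1), p ∘ₗ ((-(δ ∘ₗ K)) ^ k) ∘ₗ δ ∘ₗ i)
        = d' + p ∘ₗ ((a * δ) ∘ₗ i)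
    congr 1
    simp only [hXc]
    rw [hadef]
    ext x
    simp [LinearMap.sum_apply, map_sum, Module.End.mul_apply, Finset.sum_apply]
  refine ⟨?_, ?_, ?_, ?_, ?_, ?_, ?_, ?_⟩
  · -- d'new ∘ d'new = 0
    rw [hdnew]
    have hZ : d * (a * δ) + (a * δ) * d + (a * δ) * ((i ∘ₗ p) * (a * δ)) = 0 := by
      have c1 : (a * δ) * ((i ∘ₗ p) * (a * δ)) = (δ * (b * ((i ∘ₗ p) * a))) * δ := by
        nth_rewrite 1 [hab]
        noncomm_ring
      have e2 : d * (a * δ) = (a * (d + δ) - δ * (b * ((i ∘ₗ p) * a))) * δ := by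
        calc d * (a * δ) = (d * a) * δ := by rw [mul_assoc]
        _ = _ := by rw [D1]
      rw [c1, e2]
      calc (a * (d + δ) - δ * (b * ((i ∘ₗ p) * a))) * δ + (a * δ) * d
          + (δ * (b * ((i ∘ₗ p) * a))) * δ
          = a * (d * δ + δ * d + δ * δ) := by noncomm_ring
      _ = 0 := by rw [hdδ, mul_zero]
    have expand : (d' + p ∘ₗ ((a * δ) ∘ₗ i)) ∘ₗ (d' + p ∘ₗ ((a * δ) ∘ₗ i))
        = p ∘ₗ ((d * (a * δ) + (a * δ) * d + (a * δ) * ((i ∘ₗ p) * (a * δ))) ∘ₗ i) := by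
      have A : d' ∘ₗ (p ∘ₗ ((a * δ) ∘ₗ i)) = p ∘ₗ ((d * (a * δ)) ∘ₗ i) := by
        rw [← LinearMap.comp_assoc, hp]
        simp [Module.End.mul_eq_comp, LinearMap.comp_assoc]
      have B : (p ∘ₗ ((a * δ) ∘ₗ i)) ∘ₗ d' = p ∘ₗ (((a * δ) * d) ∘ₗ i) := by
        rw [LinearMap.comp_assoc, LinearMap.comp_assoc, ← hi]
        simp [Module.End.mul_eq_comp, LinearMap.comp_assoc]
      have C : (p ∘ₗ ((a * δ) ∘ₗ i)) ∘ₗ (p ∘ₗ ((a * δ) ∘ₗ i))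
          = p ∘ₗ (((a * δ) * ((i ∘ₗ p) * (a * δ))) ∘ₗ i) := by
            simp [Module.End.mul_eq_comp, LinearMap.comp_assoc]
      calc (d' + p ∘ₗ ((a * δ) ∘ₗ i)) ∘ₗ (d' + p ∘ₗ ((a * δ) ∘ₗ i))
          = d' ∘ₗ d' + (d' ∘ₗ (p ∘ₗ ((a * δ) ∘ₗ i)) + ((p ∘ₗ ((a * δ) ∘ₗ i)) ∘ₗ d'
            + (p ∘ₗ ((a * δ) ∘ₗ i)) ∘ₗ (p ∘ₗ ((a * δ) ∘ₗ i)))) := by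
              simp only [LinearMap.add_comp, LinearMap.comp_add]; abel
      _ = p ∘ₗ ((d * (a * δ)) ∘ₗ i) + (p ∘ₗ (((a * δ) * d) ∘ₗ i)
            + p ∘ₗ (((a * δ) * ((i ∘ₗ p) * (a * δ))) ∘ₗ i)) := by
              rw [hd', A, B, C, zero_add]
      _ = p ∘ₗ ((d * (a * δ) + (a * δ) * d + (a * δ) * ((i ∘ₗ p) * (a * δ))) ∘ₗ i) := by
              ext x; simp [add_assoc]
    rw [expand, hZ]
    simp
  · -- chain map inew
    rw [hinew, hdnew]
    have e2b : (d + δ) * b = b * d + b * ((i ∘ₗ p) * (δ * b)) := by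
      rw [D2]; noncomm_ring
    have A : (b * d) ∘ₗ i = (b ∘ₗ i) ∘ₗ d' := by
      rw [Module.End.mul_eq_comp, LinearMap.comp_assoc, hi, ← LinearMap.comp_assoc]
    have B : (b * ((i ∘ₗ p) * (δ * b))) ∘ₗ i = (b ∘ₗ i) ∘ₗ (p ∘ₗ ((a * δ) ∘ₗ i)) := by
      rw [← hab]
      simp [Module.End.mul_eq_comp, LinearMap.comp_assoc]
    calc (d + δ) ∘ₗ (b ∘ₗ i) = ((d + δ) * b) ∘ₗ i := by
            rw [Module.End.mul_eq_comp, LinearMap.comp_assoc]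
    _ = (b * d) ∘ₗ i + (b * ((i ∘ₗ p) * (δ * b))) ∘ₗ i := by
            rw [e2b, LinearMap.add_comp]
    _ = (b ∘ₗ i) ∘ₗ d' + (b ∘ₗ i) ∘ₗ (p ∘ₗ ((a * δ) ∘ₗ i)) := by rw [A, B]
    _ = (b ∘ₗ i) ∘ₗ (d' + p ∘ₗ ((a * δ) ∘ₗ i)) := by rw [LinearMap.comp_add]
  · -- chain map pnew
    rw [hdnew, hpnew]
    have A : d' ∘ₗ (p ∘ₗ a) = p ∘ₗ (a * (d + δ) - δ * (b * ((i ∘ₗ p) * a))) := by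
      rw [← LinearMap.comp_assoc, hp, LinearMap.comp_assoc, ← D1]
      simp [Module.End.mul_eq_comp]
    have B : (p ∘ₗ ((a * δ) ∘ₗ i)) ∘ₗ (p ∘ₗ a) = p ∘ₗ (δ * (b * ((i ∘ₗ p) * a))) := by
      have : (a * δ) * ((i ∘ₗ p) * a) = δ * (b * ((i ∘ₗ p) * a)) := by
            rw [hab]; noncomm_ring
      rw [← this]
      simp [Module.End.mul_eq_comp, LinearMap.comp_assoc]
    calc (d' + p ∘ₗ ((a * δ) ∘ₗ i)) ∘ₗ (p ∘ₗ a)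
        = d' ∘ₗ (p ∘ₗ a) + (p ∘ₗ ((a * δ) ∘ₗ i)) ∘ₗ (p ∘ₗ a) := by
            rw [LinearMap.add_comp]
    _ = p ∘ₗ (a * (d + δ) - δ * (b * ((i ∘ₗ p) * a)))
        + p ∘ₗ (δ * (b * ((i ∘ₗ p) * a))) := by rw [A, B]
    _ = p ∘ₗ (a * (d + δ)) := by ext x; simp
    _ = (p ∘ₗ a) ∘ₗ (d + δ) := by
            rw [Module.End.mul_eq_comp, ← LinearMap.comp_assoc]
  · -- pnew ∘ inew = id
    rw [hpnew, hinew]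
    have hab2 : a * b = b - δ * (b * K) := by
      have ha' : a = 1 - δ * (K * a) := by
            calc a = 1 - (δ * K) * a := by rw [h2]; noncomm_ring
        _ = 1 - δ * (K * a) := by rw [mul_assoc]
      calc a * b = (1 - δ * (K * a)) * b := by rw [← ha']
      _ = b - δ * ((K * a) * b) := by noncomm_ring
      _ = b - δ * ((b * K) * b) := by rw [hKa]
      _ = b - δ * (b * (K * b)) := by rw [mul_assoc]
      _ = b - δ * (b * K) := by rw [m4]
    calc (p ∘ₗ a) ∘ₗ (b ∘ₗ i) = p ∘ₗ ((a * b) ∘ₗ i) := by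
            simp [Module.End.mul_eq_comp, LinearMap.comp_assoc]
    _ = p ∘ₗ ((b - δ * (b * K)) ∘ₗ i) := by rw [hab2]
    _ = p ∘ₗ (b ∘ₗ i) - p ∘ₗ (δ ∘ₗ (b ∘ₗ (K ∘ₗ i))) := by
            simp [LinearMap.sub_comp, LinearMap.comp_sub, Module.End.mul_eq_comp,
          LinearMap.comp_assoc]
    _ = p ∘ₗ (b ∘ₗ i) := by rw [hKi]; simp
    _ = (p ∘ₗ b) ∘ₗ i := by rw [LinearMap.comp_assoc]
    _ = LinearMap.id := by rw [m2, hpi]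
  · -- homotopy identity
    rw [hKnew, hinew, hpnew]
    have conv1 : (d + δ) ∘ₗ (K ∘ₗ a) = (d + δ) * (K * a) := rfl
    have conv2 : (K ∘ₗ a) ∘ₗ (d + δ) = (K * a) * (d + δ) := rfl
    have conv3 : (b ∘ₗ i) ∘ₗ (p ∘ₗ a) = b * ((i ∘ₗ p) * a) := by
      simp [Module.End.mul_eq_comp, LinearMap.comp_assoc]
    rw [conv1, conv2, conv3, G5core]
    rfl
  · -- Knew ∘ Knew = 0
    rw [hKnew]
    have : (K ∘ₗ a) ∘ₗ (K ∘ₗ a) = (K * a) * (K * a) := rfl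
    rw [this]
    calc (K * a) * (K * a) = K * ((a * K) * a) := by noncomm_ring
    _ = K * (K * a) := by rw [m3]
    _ = (K * K) * a := by rw [mul_assoc]
    _ = 0 := by rw [hKK', zero_mul]
  · -- Knew ∘ inew = 0
    rw [hKnew, hinew]
    have key : (K * a) * b = b * K := by
      rw [hKa]
      calc (b * K) * b = b * (K * b) := by rw [mul_assoc]
      _ = b * K := by rw [m4]
    calc (K ∘ₗ a) ∘ₗ (b ∘ₗ i) = ((K * a) * b) ∘ₗ i := by
            simp [Module.End.mul_eq_comp, LinearMap.comp_assoc]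
    _ = (b * K) ∘ₗ i := by rw [key]
    _ = b ∘ₗ (K ∘ₗ i) := by rw [Module.End.mul_eq_comp, LinearMap.comp_assoc]
    _ = 0 := by rw [hKi]; simp
  · -- pnew ∘ Knew = 0
    rw [hpnew, hKnew]
    have key : a * (K * a) = K * a := by
      calc a * (K * a) = (a * K) * a := by rw [← mul_assoc]
      _ = K * a := by rw [m3]
    calc (p ∘ₗ a) ∘ₗ (K ∘ₗ a) = p ∘ₗ (a * (K * a)) := by
            simp [Module.End.mul_eq_comp, LinearMap.comp_assoc]
    _ = p ∘ₗ (K * a) := by rw [key]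
    _ = (p ∘ₗ K) ∘ₗ a := by rw [Module.End.mul_eq_comp, ← LinearMap.comp_assoc]
    _ = 0 := by rw [hpK]; simp
end

section
/- Wick's lemma in one variable: for every real polynomial O and every ħ > 0, the value of e^{(ħ/2) d²/dx²} O at x = 0 equals the Gaussian average (2πħ)^{-1/2} ∫_{-∞}^{∞} e^{-x²/(2ħ)} O(x) dx. Here e^{(ħ/2)d²/dx²}O denotes the (finite, since O is polynomial) exponential series Σ_{k≥0} (ħ/2)^k/k! · O^{(2k)}. -/
open MeasureTheory

open Real

lemma intg_pow_gauss {b : ℝ} (hb : 0 < b) (n : ℕ) :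
    Integrable fun x : ℝ => x ^ n * Real.exp (-b * x ^ 2) := by
  have hs : (-1 : ℝ) < (n : ℝ) := by
    have : (0:ℝ) ≤ (n:ℝ) := Nat.cast_nonneg n
    linarith
  simpa [Real.rpow_natCast] using integrable_rpow_mul_exp_neg_mul_sq hb hs

lemma gauss_deriv {b : ℝ} (n : ℕ) (x : ℝ) :
    HasDerivAt (fun x : ℝ => x ^ (n + 1) * Real.exp (-b * x ^ 2))
      (((n : ℝ) + 1) * (x ^ n * Real.exp (-b * x ^ 2))
        - (2 * b) * (x ^ (n + 2) * Real.exp (-b * x ^ 2))) x := by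
  have h1 : HasDerivAt (fun x : ℝ => x ^ (n + 1)) (((n : ℝ) + 1) * x ^ n) x := by
    simpa using hasDerivAt_pow (n + 1) x
  have h2 : HasDerivAt (fun x : ℝ => Real.exp (-b * x ^ 2))
      (Real.exp (-b * x ^ 2) * (-b * (2 * x))) x := by
    have : HasDerivAt (fun x : ℝ => -b * x ^ 2) (-b * (2 * x)) x := by
      simpa using ((hasDerivAt_pow 2 x).const_mul (-b))
    exact this.exp
  have := h1.mul h2
  exact this.congr_deriv (by ring)

lemma gauss_parts {b : ℝ} (hb : 0 < b) (n : ℕ) :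
    ∫ x : ℝ, x ^ (n + 2) * Real.exp (-b * x ^ 2)
      = ((n : ℝ) + 1) / (2 * b) * ∫ x : ℝ, x ^ n * Real.exp (-b * x ^ 2) := by
  have hint : Integrable fun x : ℝ =>
      ((n : ℝ) + 1) * (x ^ n * Real.exp (-b * x ^ 2))
        - (2 * b) * (x ^ (n + 2) * Real.exp (-b * x ^ 2)) :=
    ((intg_pow_gauss hb n).const_mul _).sub ((intg_pow_gauss hb (n + 2)).const_mul _)
  have h0 := integral_eq_zero_of_hasDerivAt_of_integrable (gauss_deriv (b := b) n) hint
    (intg_pow_gauss hb (n + 1))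
  rw [integral_sub ((intg_pow_gauss hb n).const_mul _) ((intg_pow_gauss hb (n + 2)).const_mul _),
    MeasureTheory.integral_const_mul, MeasureTheory.integral_const_mul, sub_eq_zero] at h0
  have hb2 : (2 * b) ≠ 0 := by positivity
  field_simp at h0 ⊢
  linarith [h0]

lemma gauss_odd {b : ℝ} (hb : 0 < b) (k : ℕ) :
    ∫ x : ℝ, x ^ (2 * k + 1) * Real.exp (-b * x ^ 2) = 0 := by
  induction k with
  | zero =>
    have hd : ∀ x : ℝ, HasDerivAt (fun x : ℝ => -(2 * b)⁻¹ * Real.exp (-b * x ^ 2))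
        (x * Real.exp (-b * x ^ 2)) x := by
      intro x
      have h2 : HasDerivAt (fun x : ℝ => Real.exp (-b * x ^ 2))
          (Real.exp (-b * x ^ 2) * (-b * (2 * x))) x := by
        have : HasDerivAt (fun x : ℝ => -b * x ^ 2) (-b * (2 * x)) x := by
          simpa using ((hasDerivAt_pow 2 x).const_mul (-b))
        exact this.exp
      have := h2.const_mul (-(2 * b)⁻¹)
      refine this.congr_deriv ?_
      have hb0 : b ≠ 0 := hb.ne'
      field_simp
    have hint : Integrable fun x : ℝ => x * Real.exp (-b * x ^ 2) := by
      simpa using intg_pow_gauss hb 1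
    have hint2 : Integrable fun x : ℝ => -(2 * b)⁻¹ * Real.exp (-b * x ^ 2) :=
      (integrable_exp_neg_mul_sq hb).const_mul _
    have := integral_eq_zero_of_hasDerivAt_of_integrable hd hint hint2
    simpa using this
  | succ k ih =>
    have := gauss_parts hb (2 * k + 1)
    have he : 2 * (k + 1) + 1 = (2 * k + 1) + 2 := by ring
    rw [he, this, ih, mul_zero]

lemma gauss_even {b : ℝ} (hb : 0 < b) (k : ℕ) :
    ∫ x : ℝ, x ^ (2 * k) * Real.exp (-b * x ^ 2)
      = Real.sqrt (Real.pi / b) * (Nat.factorial (2 * k) : ℝ)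
          / ((Nat.factorial k : ℝ) * (4 * b) ^ k) := by
  induction k with
  | zero => simpa using integral_gaussian b
  | succ k ih =>
    have he : 2 * (k + 1) = (2 * k) + 2 := by ring
    rw [he, gauss_parts hb (2 * k), ih]
    have h1 : (Nat.factorial (2 * (k + 1)) : ℝ)
        = (2 * (k : ℝ) + 2) * (2 * (k : ℝ) + 1) * (Nat.factorial (2 * k) : ℝ) := by
      have : 2 * (k + 1) = (2 * k + 1) + 1 := by ring
      rw [this, Nat.factorial_succ, Nat.factorial_succ]
      push_cast
      ring
    have h2 : (Nat.factorial (k + 1) : ℝ) = ((k : ℝ) + 1) * (Nat.factorial k : ℝ) := by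
      rw [Nat.factorial_succ]; push_cast; ring
    rw [← he, h1, h2]
    have hb' : b ≠ 0 := ne_of_gt hb
    have hfk : (Nat.factorial k : ℝ) ≠ 0 := by positivity
    field_simp
    push_cast
    ring

lemma sum_range_two_mul (n : ℕ) (f : ℕ → ℝ) :
    ∑ i ∈ Finset.range (2 * n), f i = ∑ i ∈ Finset.range n, (f (2 * i) + f (2 * i + 1)) := by
  induction n with
  | zero => simp
  | succ n ih =>
    have : 2 * (n + 1) = (2 * n + 1) + 1 := by ring
    rw [this, Finset.sum_range_succ, Finset.sum_range_succ, ih, Finset.sum_range_succ]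
    ring

/-- Wick's lemma in one variable.  For a real polynomial `O` and `ħ > 0`,
`(e^{(ħ/2) d²/dx²} O)(0)` (a finite sum since `O` is polynomial) equals the normalized
Gaussian average `(2πħ)^{-1/2} ∫ e^{-x²/(2ħ)} O(x) dx`. -/
theorem wick_lemma_one_variable (O : Polynomial ℝ) (h : ℝ) (hh : 0 < h) :
    ∑ k ∈ Finset.range (O.natDegree + 1),
        (h / 2) ^ k / (Nat.factorial k : ℝ) *
          Polynomial.eval 0 ((fun q : Polynomial ℝ => Polynomial.derivative q)^[2 * k] O)
      = (Real.sqrt (2 * Real.pi * h))⁻¹ *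
          ∫ x : ℝ, Real.exp (-x ^ 2 / (2 * h)) * O.eval x := by
  classical
  set d := O.natDegree with hd
  have hb : (0 : ℝ) < (2 * h)⁻¹ := by positivity
  set b : ℝ := (2 * h)⁻¹ with hbdef
  have hsqrt : Real.sqrt (Real.pi / b) = Real.sqrt (2 * Real.pi * h) := by
    congr 1
    rw [hbdef]
    field_simp
  have hsq_pos : (0 : ℝ) < Real.sqrt (2 * Real.pi * h) := by
    apply Real.sqrt_pos.2
    positivity
  -- rewrite the integral
  have hint : (∫ x : ℝ, Real.exp (-x ^ 2 / (2 * h)) * O.eval x)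
      = ∑ j ∈ Finset.range (2 * (d + 1)),
          O.coeff j * ∫ x : ℝ, x ^ j * Real.exp (-b * x ^ 2) := by
    have hcongr : ∀ x : ℝ, Real.exp (-x ^ 2 / (2 * h)) * O.eval x
        = ∑ j ∈ Finset.range (2 * (d + 1)), O.coeff j * (x ^ j * Real.exp (-b * x ^ 2)) := by
      intro x
      have he : Real.exp (-x ^ 2 / (2 * h)) = Real.exp (-b * x ^ 2) := by
        congr 1
        rw [hbdef]
        field_simp
      have hev : O.eval x = ∑ j ∈ Finset.range (2 * (d + 1)), O.coeff j * x ^ j := by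
        rw [Polynomial.eval_eq_sum_range' (by omega : d < 2 * (d + 1))]
      rw [he, hev, Finset.mul_sum]
      refine Finset.sum_congr rfl fun j _ => by ring
    simp_rw [hcongr]
    rw [integral_finset_sum _ (fun j _ => ((intg_pow_gauss hb j).const_mul _))]
    refine Finset.sum_congr rfl fun j _ => ?_
    exact MeasureTheory.integral_const_mul _ _
  rw [hint, sum_range_two_mul (d + 1), Finset.mul_sum]
  refine Finset.sum_congr rfl fun k _ => ?_
  rw [gauss_odd hb k, gauss_even hb k, mul_zero, add_zero, hsqrt]
  have heval : Polynomial.eval 0 ((fun q : Polynomial ℝ => Polynomial.derivative q)^[2 * k] O)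
      = (Nat.factorial (2 * k) : ℝ) * O.coeff (2 * k) := by
    rw [← Polynomial.coeff_zero_eq_eval_zero]
    show (Polynomial.derivative^[2 * k] O).coeff 0 = _
    rw [Polynomial.coeff_iterate_derivative, zero_add, Nat.descFactorial_self, nsmul_eq_mul]
  rw [heval]
  have h4b : (4 * b) ^ k = 2 ^ k / h ^ k := by
    rw [eq_div_iff (by positivity : (h:ℝ) ^ k ≠ 0), ← mul_pow]
    congr 1
    rw [hbdef]
    field_simp
    ring
  rw [h4b]
  have hfk : (Nat.factorial k : ℝ) ≠ 0 := by positivity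
  have hsne : Real.sqrt (2 * Real.pi * h) ≠ 0 := ne_of_gt hsq_pos
  field_simp
  rw [mul_right_comm, ← mul_pow]
  ring
end

section
/- Duhamel/Dyson expansion for matrices: for square matrices A, B over ℝ or ℂ and T ≥ 0, e^{T(A+B)} = Σ_{k=0}^{∞} ∫_{Δ_k(T)} e^{t₀A} B e^{t₁A} B ⋯ B e^{t_kA} dt₁⋯dt_k, where Δ_k(T) = {(t₀,…,t_k) : t_j ≥ 0, t₀+⋯+t_k = T} and the series converges absolutely in operator norm. -/
open MeasureTheory

namespace DysonAux

open NormedSpace Set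

variable {𝔸 : Type*} [NormedRing 𝔸] [NormedAlgebra ℂ 𝔸] [CompleteSpace 𝔸]

/-- The simplex `{t : 0 ≤ tᵢ, ∑ tᵢ ≤ T}`. -/
def S (k : ℕ) (T : ℝ) : Set (Fin k → ℝ) := {t | (∀ i, 0 ≤ t i) ∧ ∑ i, t i ≤ T}

noncomputable def dyson (X A B : 𝔸) (k : ℕ) (T : ℝ) : 𝔸 :=
  ∫ t in S k T, exp ((T - ∑ i, t i) • X) *
      (List.ofFn fun i : Fin k => B * exp (t i • A)).prod

omit [NormedAlgebra ℂ 𝔸] [CompleteSpace 𝔸] in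
lemma isCompact_S (k : ℕ) (T : ℝ) : IsCompact (S k T) := by
  have hsub : S k T ⊆ Set.pi Set.univ (fun _ : Fin k => Icc (0:ℝ) (max T 0)) := by
    rintro t ⟨h0, hs⟩ i _
    exact ⟨h0 i, le_trans (le_trans (Finset.single_le_sum
      (fun j _ => h0 j) (Finset.mem_univ i)) hs) (le_max_left _ _)⟩
  have hclosed : IsClosed (S k T) := by
    have : S k T = (⋂ i, {t : Fin k → ℝ | 0 ≤ t i}) ∩ {t | ∑ i, t i ≤ T} := by
      ext t; simp [S, Set.mem_iInter]
    rw [this]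
    exact IsClosed.inter (isClosed_iInter fun i =>
        isClosed_le continuous_const (continuous_apply i))
      (isClosed_le (continuous_finset_sum _ fun i _ => continuous_apply i) continuous_const)
  exact (isCompact_univ_pi fun _ => isCompact_Icc).of_isClosed_subset hclosed hsub

lemma measurableSet_S (k : ℕ) (T : ℝ) : MeasurableSet (S k T) :=
  (isCompact_S k T).isClosed.measurableSet

omit [NormedAlgebra ℂ 𝔸] [CompleteSpace 𝔸] in
lemma S_empty {k : ℕ} {T : ℝ} (h : T < 0) : S k T = ∅ := by
  ext t
  simp only [S, Set.mem_setOf_eq, Set.mem_empty_iff_false, iff_false, not_and]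
  intro h0 hs
  exact absurd (le_trans (Finset.sum_nonneg fun i _ => h0 i) hs) (not_le.2 h)

lemma continuous_ofFn_prod {α : Type*} [TopologicalSpace α] (k : ℕ)
    (g : Fin k → α → 𝔸) (h : ∀ i, Continuous (g i)) :
    Continuous fun x => (List.ofFn fun i => g i x).prod := by
  induction k with
  | zero => simpa [List.ofFn_zero] using continuous_const
  | succ n ih =>
      simp only [List.ofFn_succ, List.prod_cons]
      exact (h 0).mul (ih _ fun i => h i.succ)

lemma continuous_integrand (X A B : 𝔸) (k : ℕ) (T : ℝ) :
    Continuous fun t : Fin k → ℝ => exp ((T - ∑ i, t i) • X) *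
      (List.ofFn fun i : Fin k => B * exp (t i • A)).prod := by
  refine Continuous.mul ?_ (continuous_ofFn_prod k _ fun i => ?_)
  · exact (continuous_iff_continuousAt.2 fun x => (exp_analytic (𝕂 := ℂ) x).continuousAt).comp
      ((continuous_const.sub (continuous_finset_sum _ fun i _ => continuous_apply i)).smul
        continuous_const)
  · exact continuous_const.mul
      ((continuous_iff_continuousAt.2 fun x => (exp_analytic (𝕂 := ℂ) x).continuousAt).comp ((continuous_apply i).smul continuous_const))

lemma integrableOn_integrand (X A B : 𝔸) (k : ℕ) (T : ℝ) :
    IntegrableOn (fun t : Fin k → ℝ => exp ((T - ∑ i, t i) • X) *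
      (List.ofFn fun i : Fin k => B * exp (t i • A)).prod) (S k T) := by
  exact (continuous_integrand X A B k T).continuousOn.integrableOn_compact (isCompact_S k T)

lemma integral_mul_const {α : Type*} [MeasurableSpace α] {μ : Measure α}
    (c : 𝔸) (f : α → 𝔸) (hf : Integrable f μ) :
    ∫ x, f x * c ∂μ = (∫ x, f x ∂μ) * c := by
  simpa using ((ContinuousLinearMap.mul ℝ 𝔸).flip c).integral_comp_comm hf

lemma integral_insertNth {k : ℕ} (i : Fin (k + 1)) (f : (Fin (k + 1) → ℝ) → 𝔸)
    (hf : Integrable f (volume : Measure (Fin (k + 1) → ℝ))) :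
    (∫ t, f t) = ∫ u : ℝ, ∫ t' : Fin k → ℝ, f (i.insertNth u t') := by
  have hmp :=
    (measurePreserving_piFinSuccAbove (fun _ : Fin (k + 1) => (volume : Measure ℝ)) i).symm
  rw [volume_pi, ← hmp.integral_comp']
  have hint : Integrable
      (fun p : ℝ × (Fin k → ℝ) =>
        f ((MeasurableEquiv.piFinSuccAbove (fun _ : Fin (k + 1) => ℝ) i).symm p))
      ((volume : Measure ℝ).prod (Measure.pi fun _ => (volume : Measure ℝ))) := by
    have := (hmp.integrable_comp_emb
      (MeasurableEquiv.measurableEmbedding _)).2 (by rw [← volume_pi]; exact hf)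
    exact this
  rw [MeasureTheory.integral_prod _ hint]
  simp only [MeasurableEquiv.piFinSuccAbove_symm_apply, Fin.insertNthEquiv, Equiv.coe_fn_mk]
  rfl

lemma integral_insertNth_symm {k : ℕ} (i : Fin (k + 1)) (f : (Fin (k + 1) → ℝ) → 𝔸)
    (hf : Integrable f (volume : Measure (Fin (k + 1) → ℝ))) :
    (∫ t, f t) = ∫ t' : Fin k → ℝ, ∫ u : ℝ, f (i.insertNth u t') := by
  have hmp :=
    (measurePreserving_piFinSuccAbove (fun _ : Fin (k + 1) => (volume : Measure ℝ)) i).symm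
  rw [volume_pi, ← hmp.integral_comp']
  have hint : Integrable
      (fun p : ℝ × (Fin k → ℝ) =>
        f ((MeasurableEquiv.piFinSuccAbove (fun _ : Fin (k + 1) => ℝ) i).symm p))
      ((volume : Measure ℝ).prod (Measure.pi fun _ => (volume : Measure ℝ))) := by
    have := (hmp.integrable_comp_emb
      (MeasurableEquiv.measurableEmbedding _)).2 (by rw [← volume_pi]; exact hf)
    exact this
  rw [MeasureTheory.integral_prod_symm _ hint]
  simp only [MeasurableEquiv.piFinSuccAbove_symm_apply, Fin.insertNthEquiv, Equiv.coe_fn_mk]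
  rfl

lemma norm_exp_le (x : 𝔸) : ‖exp x‖ ≤ max ‖(1 : 𝔸)‖ 1 * Real.exp ‖x‖ := by
  have hterm : ∀ n : ℕ, ‖((n.factorial :ℂ))⁻¹ • x ^ n‖ ≤
      max ‖(1 : 𝔸)‖ 1 * (‖x‖ ^ n / n.factorial) := by
    intro n
    rw [norm_smul]
    have h1 : ‖((n.factorial : ℂ))⁻¹‖ = (n.factorial : ℝ)⁻¹ := by
      rw [norm_inv, Complex.norm_natCast]
    rw [h1]
    have h2 : ‖x ^ n‖ ≤ max ‖(1 : 𝔸)‖ 1 * ‖x‖ ^ n := by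
      rcases Nat.eq_zero_or_pos n with h | h
      · subst h; simpa using le_max_left ‖(1:𝔸)‖ 1
      · calc ‖x ^ n‖ ≤ ‖x‖ ^ n := norm_pow_le' x h
          _ ≤ max ‖(1 : 𝔸)‖ 1 * ‖x‖ ^ n := by
              nlinarith [pow_nonneg (norm_nonneg x) n, le_max_right ‖(1:𝔸)‖ 1]
    calc (n.factorial : ℝ)⁻¹ * ‖x ^ n‖ ≤ (n.factorial : ℝ)⁻¹ * (max ‖(1 : 𝔸)‖ 1 * ‖x‖ ^ n) := by
          exact mul_le_mul_of_nonneg_left h2 (by positivity)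
      _ = max ‖(1 : 𝔸)‖ 1 * (‖x‖ ^ n / n.factorial) := by ring
  have hsum2 : Summable fun n : ℕ => max ‖(1 : 𝔸)‖ 1 * (‖x‖ ^ n / n.factorial) :=
    (Real.summable_pow_div_factorial ‖x‖).mul_left _
  calc ‖exp x‖ = ‖∑' n : ℕ, ((n.factorial : ℂ))⁻¹ • x ^ n‖ := by
        rw [NormedSpace.exp_eq_tsum ℂ]
    _ ≤ ∑' n : ℕ, ‖((n.factorial : ℂ))⁻¹ • x ^ n‖ :=
        norm_tsum_le_tsum_norm (NormedSpace.norm_expSeries_summable' x)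
    _ ≤ ∑' n : ℕ, max ‖(1 : 𝔸)‖ 1 * (‖x‖ ^ n / n.factorial) :=
        Summable.tsum_le_tsum hterm (NormedSpace.norm_expSeries_summable' x) hsum2
    _ = max ‖(1 : 𝔸)‖ 1 * ∑' n : ℕ, ‖x‖ ^ n / n.factorial := tsum_mul_left
    _ = max ‖(1 : 𝔸)‖ 1 * Real.exp ‖x‖ := by
        rw [Real.exp_eq_exp_ℝ, NormedSpace.exp_eq_tsum_div]

lemma dyson_neg {X A B : 𝔸} {k : ℕ} {T : ℝ} (h : T < 0) : dyson X A B k T = 0 := by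
  rw [dyson, S_empty h, Measure.restrict_empty, integral_zero_measure]

lemma dyson_zero (X A B : 𝔸) {T : ℝ} (hT : 0 ≤ T) : dyson X A B 0 T = exp (T • X) := by
  have h1 : S 0 T = (Set.univ : Set (Fin 0 → ℝ)) := by
    ext t
    simp [S, hT]
  have h2 : (volume : Measure (Fin 0 → ℝ)) Set.univ = 1 := by
    rw [MeasureTheory.volume_pi, Measure.pi_univ]
    simp
  rw [dyson, h1, Measure.restrict_univ]
  simp only [Finset.univ_eq_empty, Finset.sum_empty, sub_zero, List.ofFn_zero, List.prod_nil,
    mul_one]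
  rw [integral_const, measureReal_def, h2]
  simp

lemma snoc_mem_S {k : ℕ} {T u : ℝ} {t' : Fin k → ℝ} :
    (Fin.snoc t' u : Fin (k + 1) → ℝ) ∈ S (k + 1) T ↔ (0 ≤ u ∧ t' ∈ S k (T - u)) := by
  have hsum : ∑ i, (Fin.snoc t' u : Fin (k + 1) → ℝ) i = ∑ i, t' i + u := by
    rw [Fin.sum_univ_castSucc]; simp
  simp only [S, Set.mem_setOf_eq, hsum]
  constructor
  · rintro ⟨h0, hs⟩
    exact ⟨by simpa using h0 (Fin.last k),
      fun i => by simpa using h0 i.castSucc, by linarith⟩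
  · rintro ⟨hu, h0, hs⟩
    refine ⟨fun j => ?_, by linarith⟩
    refine Fin.lastCases ?_ ?_ j
    · simpa using hu
    · intro i; simpa using h0 i

lemma indicator_snoc (X A B : 𝔸) (k : ℕ) (T u : ℝ) (t' : Fin k → ℝ) :
    (S (k + 1) T).indicator
      (fun t => exp ((T - ∑ i, t i) • X) *
        (List.ofFn fun i : Fin (k + 1) => B * exp (t i • A)).prod)
      (Fin.snoc t' u) =
    (if 0 ≤ u then (S k (T - u)).indicator
      (fun t'' => (exp ((T - u - ∑ i, t'' i) • X) *
        (List.ofFn fun i : Fin k => B * exp (t'' i • A)).prod) * (B * exp (u • A))) t'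
      else 0) := by
  have hsum : ∑ i, (Fin.snoc t' u : Fin (k + 1) → ℝ) i = ∑ i, t' i + u := by
    rw [Fin.sum_univ_castSucc]; simp
  have hprod : (List.ofFn fun i : Fin (k + 1) =>
        B * exp ((Fin.snoc t' u : Fin (k + 1) → ℝ) i • A)).prod
      = (List.ofFn fun i : Fin k => B * exp (t' i • A)).prod * (B * exp (u • A)) := by
    rw [List.ofFn_succ']
    simp [Fin.snoc_castSucc, Fin.snoc_last]
  by_cases hu : 0 ≤ u
  · simp only [hu, if_true]
    by_cases hmem' : t' ∈ S k (T - u)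
    · rw [Set.indicator_of_mem (snoc_mem_S.2 ⟨hu, hmem'⟩), Set.indicator_of_mem hmem',
        hsum, hprod, ← mul_assoc]
      congr 3
      ring
    · rw [Set.indicator_of_notMem (fun h => hmem' (snoc_mem_S.1 h).2),
        Set.indicator_of_notMem hmem']
  · simp only [hu, if_false]
    exact Set.indicator_of_notMem (fun h => hu (snoc_mem_S.1 h).1) _

lemma dyson_succ (X A B : 𝔸) (k : ℕ) (T : ℝ) :
    dyson X A B (k + 1) T =
      ∫ u in Icc (0:ℝ) T, dyson X A B k (T - u) * (B * exp (u • A)) := by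
  have hF := integrableOn_integrand X A B (k + 1) T
  rw [dyson, ← integral_indicator (measurableSet_S _ _),
    integral_insertNth (Fin.last k) _ (hF.integrable_indicator (measurableSet_S _ _)),
    ← integral_indicator measurableSet_Icc]
  congr 1
  funext u
  have hins : ∀ t' : Fin k → ℝ,
      (Fin.last k).insertNth u t' = (Fin.snoc t' u : Fin (k + 1) → ℝ) := fun t' => by
    simp [Fin.insertNth_last]
  simp only [hins, indicator_snoc X A B k T u]
  by_cases hu : 0 ≤ u
  · simp only [hu, if_true]
    rw [integral_indicator (measurableSet_S _ _),
      integral_mul_const _ _ (integrableOn_integrand X A B k (T - u)), ← dyson]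
    by_cases huT : u ≤ T
    · rw [Set.indicator_of_mem (Set.mem_Icc.mpr ⟨hu, huT⟩)]
    · rw [Set.indicator_of_notMem (fun h => huT h.2),
        dyson_neg (by linarith : T - u < 0), zero_mul]
  · simp only [hu, if_false, integral_zero]
    rw [Set.indicator_of_notMem (fun h => hu h.1)]

lemma duhamel (A B : 𝔸) {s : ℝ} (hs : 0 ≤ s) :
    ∫ u in Icc (0:ℝ) s, exp ((s - u) • (A + B)) * (B * exp (u • A))
      = exp (s • (A + B)) - exp (s • A) := by
  set C : 𝔸 := A + B with hC
  have hcont : ∀ Y : 𝔸, Continuous fun u : ℝ => exp (u • Y) := fun Y =>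
    (continuous_iff_continuousAt.2 fun x => (exp_analytic (𝕂 := ℂ) x).continuousAt).comp (continuous_id.smul continuous_const)
  have hcontg : Continuous fun u : ℝ => exp ((s - u) • C) * (B * exp (u • A)) :=
    ((hcont C).comp (continuous_const.sub continuous_id)).mul
      (continuous_const.mul (hcont A))
  have hderiv : ∀ u ∈ Set.uIcc (0:ℝ) s,
      HasDerivAt (fun u : ℝ => exp ((s - u) • C) * exp (u • A))
        (-(exp ((s - u) • C) * (B * exp (u • A)))) u := by
    intro u _
    have h1 : HasDerivAt (fun u : ℝ => s - u) (-1) u := (hasDerivAt_id u).const_sub s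
    have h2 := hasDerivAt_exp_smul_const (𝕂 := ℝ) C (s - u)
    have h3 : HasDerivAt (fun u : ℝ => exp ((s - u) • C))
        ((-1 : ℝ) • (exp ((s - u) • C) * C)) u := h2.scomp u h1
    have h4 := hasDerivAt_exp_smul_const (𝕂 := ℝ) A u
    have h5 := h3.mul h4
    have hcomm : exp (u • A) * A = A * exp (u • A) :=
      (((Commute.refl A).smul_right u).exp_right).symm
    convert h5 using 1
    · rfl
    rw [neg_one_smul, hcomm, hC]
    noncomm_ring
  have hftc := intervalIntegral.integral_eq_sub_of_hasDerivAt hderiv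
    (hcontg.neg.intervalIntegrable 0 s)
  have h0 : (fun u : ℝ => exp ((s - u) • C) * exp (u • A)) s
      - (fun u : ℝ => exp ((s - u) • C) * exp (u • A)) 0
      = exp (s • A) - exp (s • C) := by
    simp [NormedSpace.exp_zero]
  rw [h0] at hftc
  rw [MeasureTheory.integral_Icc_eq_integral_Ioc, ← intervalIntegral.integral_of_le hs]
  rw [intervalIntegral.integral_neg] at hftc
  have := neg_eq_iff_eq_neg.mp hftc
  rw [this]
  abel

lemma cons_mem_S {k : ℕ} {T u : ℝ} {t' : Fin k → ℝ} :
    (Fin.cons u t' : Fin (k + 1) → ℝ) ∈ S (k + 1) T ↔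
      (0 ≤ u ∧ (∀ i, 0 ≤ t' i) ∧ u + ∑ i, t' i ≤ T) := by
  have hsum : ∑ i, (Fin.cons u t' : Fin (k + 1) → ℝ) i = u + ∑ i, t' i := by
    rw [Fin.sum_univ_succ]; simp
  simp only [S, Set.mem_setOf_eq, hsum, Fin.forall_fin_succ, Fin.cons_zero, Fin.cons_succ]
  tauto

lemma dyson_step (A B : 𝔸) (k : ℕ) {T : ℝ} (hT : 0 ≤ T) :
    dyson (A + B) A B k T = dyson A A B k T + dyson (A + B) A B (k + 1) T := by
  suffices h : dyson (A + B) A B (k + 1) T = dyson (A + B) A B k T - dyson A A B k T by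
    rw [h]; abel
  have hF := integrableOn_integrand (A + B) A B (k + 1) T
  rw [dyson, ← integral_indicator (measurableSet_S _ _),
    integral_insertNth_symm 0 _ (hF.integrable_indicator (measurableSet_S _ _))]
  have hins : ∀ (u : ℝ) (t' : Fin k → ℝ),
      (0 : Fin (k + 1)).insertNth u t' = (Fin.cons u t' : Fin (k + 1) → ℝ) := fun u t' => by
    simp [Fin.insertNth_zero]
  have main : ∀ t' : Fin k → ℝ,
      (∫ u : ℝ, (S (k + 1) T).indicator
        (fun t => exp ((T - ∑ i, t i) • (A + B)) *
          (List.ofFn fun i : Fin (k + 1) => B * exp (t i • A)).prod)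
        (Fin.cons u t'))
      = (S k T).indicator (fun t'' =>
          (exp ((T - ∑ i, t'' i) • (A + B)) - exp ((T - ∑ i, t'' i) • A)) *
            (List.ofFn fun i : Fin k => B * exp (t'' i • A)).prod) t' := by
    intro t'
    by_cases ht' : t' ∈ S k T
    · obtain ⟨h0, hSS⟩ := ht'
      have hTs : 0 ≤ T - ∑ i, t' i := by linarith
      have hptw : ∀ u : ℝ, (S (k + 1) T).indicator
          (fun t => exp ((T - ∑ i, t i) • (A + B)) *
            (List.ofFn fun i : Fin (k + 1) => B * exp (t i • A)).prod)
          (Fin.cons u t')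
          = (Icc (0:ℝ) (T - ∑ i, t' i)).indicator
              (fun u => exp ((T - ∑ i, t' i - u) • (A + B)) * (B * exp (u • A))) u *
            (List.ofFn fun i : Fin k => B * exp (t' i • A)).prod := by
        intro u
        by_cases hu : u ∈ Icc (0:ℝ) (T - ∑ i, t' i)
        · obtain ⟨hu0, hu1⟩ := hu
          have hmem : (Fin.cons u t' : Fin (k + 1) → ℝ) ∈ S (k + 1) T :=
            cons_mem_S.2 ⟨hu0, h0, by linarith⟩
          rw [Set.indicator_of_mem hmem, Set.indicator_of_mem (Set.mem_Icc.mpr ⟨hu0, hu1⟩)]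
          have hsum : ∑ i, (Fin.cons u t' : Fin (k + 1) → ℝ) i = u + ∑ i, t' i := by
            rw [Fin.sum_univ_succ]; simp
          rw [hsum, List.ofFn_succ]
          simp only [Fin.cons_zero, Fin.cons_succ, List.prod_cons]
          rw [← mul_assoc]
          congr 3
          ring
        · rw [Set.indicator_of_notMem hu, zero_mul, Set.indicator_of_notMem]
          intro hmem
          obtain ⟨hu0, _, hsum⟩ := cons_mem_S.1 hmem
          exact hu (Set.mem_Icc.mpr ⟨hu0, by linarith⟩)
      simp only [hptw]
      have hgcont : Continuous fun u : ℝ =>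
          exp ((T - ∑ i, t' i - u) • (A + B)) * (B * exp (u • A)) := by
        refine Continuous.mul ?_ (continuous_const.mul ?_)
        · exact (continuous_iff_continuousAt.2 fun x => (exp_analytic (𝕂 := ℂ) x).continuousAt).comp ((continuous_const.sub continuous_id).smul continuous_const)
        · exact (continuous_iff_continuousAt.2 fun x => (exp_analytic (𝕂 := ℂ) x).continuousAt).comp (continuous_id.smul continuous_const)
      rw [integral_mul_const _ _
          ((hgcont.continuousOn.integrableOn_compact isCompact_Icc).integrable_indicator
            measurableSet_Icc),
        integral_indicator measurableSet_Icc, duhamel A B hTs,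
        Set.indicator_of_mem (show t' ∈ S k T from ⟨h0, hSS⟩)]
    · rw [Set.indicator_of_notMem ht']
      have hzero : ∀ u : ℝ, (S (k + 1) T).indicator
          (fun t => exp ((T - ∑ i, t i) • (A + B)) *
            (List.ofFn fun i : Fin (k + 1) => B * exp (t i • A)).prod)
          (Fin.cons u t') = 0 := by
        intro u
        refine Set.indicator_of_notMem ?_ _
        intro hmem
        obtain ⟨hu0, h0, hsum⟩ := cons_mem_S.1 hmem
        exact ht' ⟨h0, by linarith⟩
      simp only [hzero, integral_zero]
  simp only [hins, main]
  rw [integral_indicator (measurableSet_S _ _)]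
  simp only [sub_mul]
  rw [integral_sub (integrableOn_integrand (A + B) A B k T) (integrableOn_integrand A A B k T),
    dyson, dyson]

lemma dyson_norm_le (X A B : 𝔸) (k : ℕ) {T : ℝ} (hT : 0 ≤ T) :
    ‖dyson X A B k T‖ ≤ (max ‖(1 : 𝔸)‖ 1 * Real.exp (T * max ‖X‖ ‖A‖)) *
      (max ‖(1 : 𝔸)‖ 1 * ‖B‖ * T) ^ k / k.factorial := by
  set c1 : ℝ := max ‖(1 : 𝔸)‖ 1 with hc1def
  set M : ℝ := max ‖X‖ ‖A‖ with hMdef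
  have hc1 : (1:ℝ) ≤ c1 := le_max_right _ _
  have hc10 : (0:ℝ) ≤ c1 := by linarith
  have hM : (0:ℝ) ≤ M := le_trans (norm_nonneg X) (le_max_left _ _)
  induction k generalizing T with
  | zero =>
      rw [dyson_zero X A B hT]
      simp only [pow_zero, Nat.factorial_zero, Nat.cast_one, mul_one, div_one]
      calc ‖exp (T • X)‖ ≤ c1 * Real.exp ‖T • X‖ := norm_exp_le _
        _ ≤ c1 * Real.exp (T * M) := by
            gcongr
            rw [norm_smul, Real.norm_of_nonneg hT]
            exact mul_le_mul_of_nonneg_left (le_max_left _ _) hT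
  | succ n ih =>
      rw [dyson_succ]
      set K : ℝ := c1 * (c1 * ‖B‖) ^ (n + 1) * Real.exp (T * M) / n.factorial with hKdef
      have hgcont : Continuous fun u : ℝ => K * (T - u) ^ n :=
        continuous_const.mul ((continuous_const.sub continuous_id).pow n)
      have hgint : IntegrableOn (fun u : ℝ => K * (T - u) ^ n) (Icc 0 T) :=
        hgcont.continuousOn.integrableOn_compact isCompact_Icc
      have hbound : ∀ u ∈ Icc (0:ℝ) T,
          ‖dyson X A B n (T - u) * (B * exp (u • A))‖ ≤ K * (T - u) ^ n := by
        rintro u ⟨hu0, huT⟩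
        have hT' : 0 ≤ T - u := by linarith
        have h1 := ih hT'
        have h2 : ‖B * exp (u • A)‖ ≤ ‖B‖ * (c1 * Real.exp (u * M)) := by
          calc ‖B * exp (u • A)‖ ≤ ‖B‖ * ‖exp (u • A)‖ := norm_mul_le _ _
            _ ≤ ‖B‖ * (c1 * Real.exp ‖u • A‖) :=
                mul_le_mul_of_nonneg_left (norm_exp_le _) (norm_nonneg B)
            _ ≤ ‖B‖ * (c1 * Real.exp (u * M)) := by
                gcongr
                rw [norm_smul, Real.norm_of_nonneg hu0]
                exact mul_le_mul_of_nonneg_left (le_max_right _ _) hu0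
        have hb0 : (0:ℝ) ≤ c1 * ‖B‖ * (T - u) :=
          mul_nonneg (mul_nonneg hc10 (norm_nonneg B)) hT'
        have hbb : (0:ℝ) ≤ c1 * Real.exp ((T - u) * M) * (c1 * ‖B‖ * (T - u)) ^ n
            / n.factorial := by
          apply div_nonneg _ (Nat.cast_nonneg _)
          exact mul_nonneg (mul_nonneg hc10 (Real.exp_nonneg _)) (pow_nonneg hb0 n)
        calc ‖dyson X A B n (T - u) * (B * exp (u • A))‖
            ≤ ‖dyson X A B n (T - u)‖ * ‖B * exp (u • A)‖ := norm_mul_le _ _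
          _ ≤ (c1 * Real.exp ((T - u) * M) * (c1 * ‖B‖ * (T - u)) ^ n / n.factorial) *
                (‖B‖ * (c1 * Real.exp (u * M))) :=
              mul_le_mul h1 h2 (norm_nonneg _) hbb
          _ = K * (T - u) ^ n := by
              have hE : Real.exp ((T - u) * M) * Real.exp (u * M) = Real.exp (T * M) := by
                rw [← Real.exp_add]; congr 1; ring
              rw [hKdef, show (c1 * ‖B‖ * (T - u)) ^ n = (c1 * ‖B‖) ^ n * (T - u) ^ n from
                mul_pow _ _ _, ← hE, pow_succ]
              field_simp
      have hstep : ‖∫ u in Icc (0:ℝ) T, dyson X A B n (T - u) * (B * exp (u • A))‖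
          ≤ ∫ u in Icc (0:ℝ) T, K * (T - u) ^ n := by
        refine norm_integral_le_of_norm_le hgint ?_
        filter_upwards [ae_restrict_mem measurableSet_Icc] with u hu
        exact hbound u hu
      refine hstep.trans ?_
      have hcomp : ∫ u in Icc (0:ℝ) T, K * (T - u) ^ n = K * (T ^ (n + 1) / (n + 1)) := by
        rw [MeasureTheory.integral_Icc_eq_integral_Ioc, ← intervalIntegral.integral_of_le hT,
          intervalIntegral.integral_const_mul]
        congr 1
        rw [intervalIntegral.integral_comp_sub_left (fun x => x ^ n) T]
        simp [integral_pow]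
      rw [hcomp, hKdef]
      apply le_of_eq
      have hfac : ((n.factorial : ℝ)) ≠ 0 := Nat.cast_ne_zero.2 n.factorial_ne_zero
      have hn1 : ((n:ℝ) + 1) ≠ 0 := by positivity
      rw [show (c1 * ‖B‖ * T) ^ (n + 1) = (c1 * ‖B‖) ^ (n + 1) * T ^ (n + 1) from
          mul_pow _ _ _, Nat.factorial_succ]
      push_cast
      field_simp
  

lemma dyson_partial (A B : 𝔸) {T : ℝ} (hT : 0 ≤ T) (N : ℕ) :
    exp (T • (A + B)) =
      (∑ k ∈ Finset.range N, dyson A A B k T) + dyson (A + B) A B N T := by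
  induction N with
  | zero => simp [dyson_zero (A + B) A B hT]
  | succ n ih =>
      rw [Finset.sum_range_succ, add_assoc, ← dyson_step A B n hT]
      exact ih

end DysonAux

/-- the Duhamel/Dyson expansion
`e^{T(A+B)} = Σ_k ∫_{Δ_k(T)} e^{t₀A} B e^{t₁A} B ⋯ B e^{t_kA} dt₁⋯dt_k`
(with `t₀ = T - (t₁+⋯+t_k)`), the series converging absolutely in norm. -/
theorem duhamel_dyson_expansion
    {𝔸 : Type*} [NormedRing 𝔸] [NormedAlgebra ℂ 𝔸] [CompleteSpace 𝔸]
    (A B : 𝔸) (T : ℝ) (hT : 0 ≤ T) :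
    let term : ℕ → 𝔸 := fun k =>
      ∫ t in {t : Fin k → ℝ | (∀ i, 0 ≤ t i) ∧ ∑ i, t i ≤ T},
        NormedSpace.exp ((T - ∑ i, t i) • A) *
          (List.ofFn fun i : Fin k => B * NormedSpace.exp (t i • A)).prod
    HasSum term (NormedSpace.exp (T • (A + B))) ∧
    Summable (fun k => ‖term k‖) := by
  intro term
  have hterm : term = fun k => DysonAux.dyson A A B k T := rfl
  set C₁ : ℝ := max ‖(1 : 𝔸)‖ 1 with hC₁
  have hC₁1 : 1 ≤ C₁ := le_max_right _ _
  -- summability of norms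
  have hbound : ∀ k, ‖term k‖ ≤
      (C₁ * Real.exp (T * max ‖A‖ ‖A‖)) * (C₁ * ‖B‖ * T) ^ k / k.factorial := by
    intro k; rw [hterm]; exact DysonAux.dyson_norm_le A A B k hT
  have hsum_bound : Summable (fun k : ℕ =>
      (C₁ * Real.exp (T * max ‖A‖ ‖A‖)) * (C₁ * ‖B‖ * T) ^ k / k.factorial) := by
    simpa [mul_div_assoc] using
      (Real.summable_pow_div_factorial (C₁ * ‖B‖ * T)).mul_left
        (C₁ * Real.exp (T * max ‖A‖ ‖A‖))
  have hnorm_sum : Summable (fun k => ‖term k‖) :=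
    Summable.of_nonneg_of_le (fun k => norm_nonneg _) hbound hsum_bound
  have hsummable : Summable term := hnorm_sum.of_norm
  refine ⟨?_, hnorm_sum⟩
  -- partial sums converge to exp
  have hR : Filter.Tendsto (fun N => DysonAux.dyson (A + B) A B N T)
      Filter.atTop (nhds 0) := by
    refine squeeze_zero_norm (fun N => DysonAux.dyson_norm_le (A + B) A B N hT) ?_
    have h0 := FloorSemiring.tendsto_pow_div_factorial_atTop (K := ℝ) (C₁ * ‖B‖ * T)
    simpa [mul_div_assoc] using h0.const_mul (C₁ * Real.exp (T * max ‖A + B‖ ‖A‖))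
  have h2 : Filter.Tendsto (fun N => ∑ k ∈ Finset.range N, term k) Filter.atTop
      (nhds (NormedSpace.exp (T • (A + B)))) := by
    have : ∀ N, ∑ k ∈ Finset.range N, term k
        = NormedSpace.exp (T • (A + B)) - DysonAux.dyson (A + B) A B N T := by
      intro N
      rw [hterm, DysonAux.dyson_partial A B hT N]; abel
    simp only [this]
    simpa using Filter.Tendsto.sub
      (tendsto_const_nhds (x := NormedSpace.exp (T • (A + B)))) hR
  have h1 := hsummable.hasSum.tendsto_sum_nat
  have heq := tendsto_nhds_unique h1 h2
  have h3 := hsummable.hasSum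
  rwa [heq] at h3
end

section
/- Explicit quantum homotopy for the free toy scalar: on the ℂ[ħ]-module V = ℂ[ħ][x] ⊕ ξ·ℂ[ħ][x] (ξ odd of degree -1) define Q_ħ(f + ξg) = (x g - ħ g'), i.e. Q_ħ(ξg) = (x - ħ d/dx)g and Q_ħ(f) = 0 on the ξ-free part — concretely Q_ħ = x ∂_ξ - ħ ∂_x∂_ξ. Define p(x^n) = ħ^m (2m-1)!! if n = 2m is even, p(x^n) = 0 if n is odd, p(ξg) = 0; i : ℂ[ħ] → V the inclusion of constants; and K(x^n) = Σ_{j=0}^{⌊(n-1)/2⌋} ħ^j · ((n-1)!!/(n-1-2j)!!) · ξ x^{n-1-2j} for n ≥ 1, K(1) = 0, K(ξg) = 0. Then Q_ħ K + K Q_ħ = id - i∘p, p∘i = id, and K² = 0, K∘i = 0, p∘K = 0. -/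
noncomputable section

/-- The coefficient ring `ℂ[ħ]`. -/
abbrev HbarRing := Polynomial ℂ

/-- The formal parameter `ħ`. -/
abbrev hbar : HbarRing := Polynomial.X

/-- The module `V = ℂ[ħ][x] ⊕ ξ·ℂ[ħ][x]`: first component the `ξ`-free part, second
component the coefficient of the odd variable `ξ`. -/
abbrev ToyV := Polynomial HbarRing × Polynomial HbarRing

/-- The BV differential `Q_ħ = x ∂_ξ - ħ ∂_x ∂_ξ`, i.e. `Q_ħ(f + ξg) = (x - ħ d/dx)g`. -/
def toyQ (v : ToyV) : ToyV :=
  ((Polynomial.X : Polynomial HbarRing) * v.2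
      - Polynomial.C hbar * Polynomial.derivative v.2, 0)

/-- The projection `p`: `p(x^{2m}) = ħ^m (2m-1)!!`, `p(x^{odd}) = 0`, `p(ξg) = 0`. -/
def toyProj (v : ToyV) : HbarRing :=
  ∑ m ∈ Finset.range (v.1.natDegree + 1),
    v.1.coeff (2 * m) * hbar ^ m * (Nat.doubleFactorial (2 * m - 1) : HbarRing)

/-- The inclusion of constants. -/
def toyIncl (c : HbarRing) : ToyV := (Polynomial.C c, 0)

/-- The chain homotopy
`K(x^n) = Σ_{j=0}^{⌊(n-1)/2⌋} ħ^j ((n-1)!!/(n-1-2j)!!) ξ x^{n-1-2j}` for `n ≥ 1`,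
`K(1) = 0`, `K(ξg) = 0`; the double-factorial ratio is the product
`(n-1)(n-3)⋯(n+1-2j)`. -/
def toyHtpy (v : ToyV) : ToyV :=
  (0, ∑ n ∈ Finset.Icc 1 v.1.natDegree, ∑ j ∈ Finset.range ((n - 1) / 2 + 1),
    Polynomial.C (v.1.coeff n * hbar ^ j *
        ((∏ l ∈ Finset.range j, (n - 1 - 2 * l) : ℕ) : HbarRing)) *
      (Polynomial.X : Polynomial HbarRing) ^ (n - 1 - 2 * j))

end

open Polynomial Finset

noncomputable section
namespace ToyAux

/-- monomial homotopy value -/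
def Kmono (n : ℕ) : Polynomial HbarRing :=
  ∑ j ∈ Finset.range ((n - 1) / 2 + 1),
    Polynomial.C (hbar ^ j * ((∏ l ∈ Finset.range j, (n - 1 - 2 * l) : ℕ) : HbarRing)) *
      (Polynomial.X : Polynomial HbarRing) ^ (n - 1 - 2 * j)

def Kr : ℕ → Polynomial HbarRing
  | 0 => 0
  | 1 => 1
  | (n+2) => Polynomial.X ^ (n+1) + Polynomial.C (hbar * ((n+1 : ℕ) : HbarRing)) * Kr n

def pm : ℕ → HbarRing
  | 0 => 1
  | 1 => 0
  | (n+2) => hbar * ((n+1 : ℕ) : HbarRing) * pm n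

lemma Kmono_one : Kmono 1 = 1 := by
  simp [Kmono]

lemma Kmono_two : Kmono 2 = Polynomial.X := by
  simp [Kmono]

lemma Kmono_rec (n : ℕ) :
    Kmono (n+3) = Polynomial.X ^ (n+2)
      + Polynomial.C (hbar * ((n+2 : ℕ) : HbarRing)) * Kmono (n+1) := by
  have h1 : (n + 3 - 1) / 2 + 1 = ((n + 1 - 1) / 2 + 1) + 1 := by omega
  rw [Kmono, h1, Finset.sum_range_succ']
  have h0 : Polynomial.C (hbar ^ 0 *
      ((∏ l ∈ Finset.range 0, (n + 3 - 1 - 2 * l) : ℕ) : HbarRing)) *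
      (Polynomial.X : Polynomial HbarRing) ^ (n + 3 - 1 - 2 * 0) = Polynomial.X ^ (n+2) := by
    simp
  rw [h0, Kmono, Finset.mul_sum, add_comm]
  refine congrArg (_ + ·) ?_
  refine Finset.sum_congr rfl ?_
  intro j hj
  have hj' : j ≤ n / 2 := by
    simp only [Finset.mem_range] at hj; omega
  have he : n + 3 - 1 - 2 * (j+1) = n + 1 - 1 - 2 * j := by omega
  have hp : (∏ l ∈ Finset.range (j+1), (n + 3 - 1 - 2 * l) : ℕ)
      = (n + 2) * (∏ l ∈ Finset.range j, (n + 1 - 1 - 2 * l) : ℕ) := by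
    rw [Finset.prod_range_succ']
    have hq : (∏ l ∈ Finset.range j, (n + 3 - 1 - 2 * (l+1)) : ℕ)
        = (∏ l ∈ Finset.range j, (n + 1 - 1 - 2 * l) : ℕ) := by
      refine Finset.prod_congr rfl ?_
      intro l hl
      simp only [Finset.mem_range] at hl
      omega
    rw [hq]
    have : n + 3 - 1 - 2 * 0 = n + 2 := by omega
    rw [this, mul_comm]
  rw [he, hp]
  push_cast
  simp only [map_mul, map_add, map_pow, map_ofNat]
  ring

lemma Kr_one : Kr 1 = 1 := rfl
lemma Kr_zero : Kr 0 = 0 := rfl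
lemma Kr_rec (n : ℕ) : Kr (n+2)
    = Polynomial.X ^ (n+1) + Polynomial.C (hbar * ((n+1 : ℕ) : HbarRing)) * Kr n := rfl

lemma Kmono_eq_Kr : ∀ n : ℕ, Kmono (n+1) = Kr (n+1) := by
  have key : ∀ n : ℕ, Kmono (n+1) = Kr (n+1) ∧ Kmono (n+2) = Kr (n+2) := by
    intro n
    induction n with
    | zero =>
      constructor
      · simpa [Kr_one] using Kmono_one
      · rw [Kmono_two, Kr_rec]
        simp [Kr_zero]
    | succ k ih =>
      refine ⟨ih.2, ?_⟩
      rw [Kmono_rec, ih.1, Kr_rec]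
  exact fun n => (key n).1

def E : ℕ → Polynomial HbarRing
  | 0 => 0
  | (m+1) => Polynomial.C (hbar * ((m+1 : ℕ) : HbarRing)) * Kr m

lemma Kr_succ (n : ℕ) : Kr (n+1) = Polynomial.X ^ n + E n := by
  cases n with
  | zero => simp [Kr_one, E]
  | succ m => rw [Kr_rec]; rfl

lemma pm_even : ∀ m : ℕ, pm (2*m) = hbar ^ m * (Nat.doubleFactorial (2*m - 1) : HbarRing) := by
  intro m
  induction m with
  | zero => simp [pm]
  | succ k ih =>
    have h1 : 2*(k+1) = (2*k) + 2 := by ring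
    have hdf : Nat.doubleFactorial (2*k+1) = (2*k+1) * Nat.doubleFactorial (2*k-1) := by
      cases k with
      | zero => simp [Nat.doubleFactorial]
      | succ m =>
        have h4 : 2*(m+1)+1 = (2*m+1) + 2 := by ring
        have h5 : 2*(m+1) - 1 = 2*m+1 := by omega
        rw [h4, h5, Nat.doubleFactorial_add_two]
    rw [h1, pm, ih]
    have h3 : 2*k + 2 - 1 = 2*k+1 := by omega
    rw [h3, hdf]
    push_cast
    ring

lemma pm_odd : ∀ m : ℕ, pm (2*m+1) = 0 := by
  intro m
  induction m with
  | zero => simp [pm]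
  | succ k ih =>
    have h1 : 2*(k+1)+1 = (2*k+1) + 2 := by ring
    rw [h1, pm, ih, mul_zero]

/-- Identity A: `X·Kr n − ħ·(Kr n)' = X^n − C (pm n)`. -/
lemma identA : ∀ n : ℕ, Polynomial.X * Kr n - Polynomial.C hbar * Polynomial.derivative (Kr n)
    = Polynomial.X ^ n - Polynomial.C (pm n) := by
  have key : ∀ n : ℕ,
      (Polynomial.X * Kr n - Polynomial.C hbar * Polynomial.derivative (Kr n)
        = Polynomial.X ^ n - Polynomial.C (pm n)) ∧
      (Polynomial.X * Kr (n+1) - Polynomial.C hbar * Polynomial.derivative (Kr (n+1))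
        = Polynomial.X ^ (n+1) - Polynomial.C (pm (n+1))) := by
    intro n
    induction n with
    | zero =>
      constructor
      · simp [Kr_zero, pm]
      · simp [Kr_one, pm]
    | succ k ih =>
      refine ⟨ih.2, ?_⟩
      rw [Kr_rec]
      have hpm : pm (k+2) = hbar * ((k+1 : ℕ) : HbarRing) * pm k := rfl
      rw [hpm]
      simp only [Polynomial.derivative_add, Polynomial.derivative_mul,
        Polynomial.derivative_C, Polynomial.derivative_X_pow, zero_mul]
      have expand : Polynomial.X * (Polynomial.X ^ (k + 1)
            + Polynomial.C (hbar * ((k+1:ℕ) : HbarRing)) * Kr k)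
          - Polynomial.C hbar * (Polynomial.C ((k+1 : ℕ) : Polynomial ℂ) * Polynomial.X ^ (k+1-1)
            + (0 + Polynomial.C (hbar * ((k+1:ℕ) : HbarRing)) * Polynomial.derivative (Kr k)))
          = Polynomial.X ^ (k+2) - Polynomial.C hbar * Polynomial.C ((k+1:ℕ) : HbarRing) * Polynomial.X ^ k
            + Polynomial.C (hbar * ((k+1:ℕ) : HbarRing)) *
              (Polynomial.X * Kr k - Polynomial.C hbar * Polynomial.derivative (Kr k)) := by
        have : k + 1 - 1 = k := rfl
        rw [this]
        ring
      rw [expand, ih.1]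
      simp only [map_mul]
      ring
  exact fun n => (key n).1

lemma htpy_snd (f g : Polynomial HbarRing) {N : ℕ} (hN : f.natDegree ≤ N) :
    (toyHtpy (f, g)).2 = ∑ n ∈ Finset.range (N+1), Polynomial.C (f.coeff n) * Kr n := by
  have step1 : (toyHtpy (f, g)).2
      = ∑ n ∈ Finset.Icc 1 f.natDegree, Polynomial.C (f.coeff n) * Kmono n := by
    simp only [toyHtpy, Kmono, Finset.mul_sum]
    refine Finset.sum_congr rfl fun n _ => Finset.sum_congr rfl fun j _ => ?_
    simp only [map_mul]
    ring
  have step2 : (toyHtpy (f, g)).2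
      = ∑ n ∈ Finset.Icc 1 f.natDegree, Polynomial.C (f.coeff n) * Kr n := by
    rw [step1]
    refine Finset.sum_congr rfl fun n hn => ?_
    obtain ⟨m, rfl⟩ : ∃ m, n = m + 1 := by
      simp only [Finset.mem_Icc] at hn; exact ⟨n - 1, by omega⟩
    rw [Kmono_eq_Kr]
  have step3 : Finset.range (f.natDegree + 1) = insert 0 (Finset.Icc 1 f.natDegree) := by
    ext a
    simp only [Finset.mem_range, Finset.mem_insert, Finset.mem_Icc]
    omega
  have step4 : (∑ n ∈ Finset.range (f.natDegree + 1), Polynomial.C (f.coeff n) * Kr n)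
      = ∑ n ∈ Finset.Icc 1 f.natDegree, Polynomial.C (f.coeff n) * Kr n := by
    rw [step3, Finset.sum_insert (by simp)]
    simp [Kr_zero]
  rw [step2, ← step4]
  refine Finset.sum_subset ?_ ?_
  · intro a ha
    simp only [Finset.mem_range] at *
    omega
  · intro a _ ha
    simp only [Finset.mem_range, not_lt] at ha
    rw [Polynomial.coeff_eq_zero_of_natDegree_lt (by omega)]
    simp

lemma sum_pair {M : Type*} [AddCommMonoid M] (h : ℕ → M) :
    ∀ m : ℕ, ∑ n ∈ Finset.range (2*m), h n = ∑ k ∈ Finset.range m, (h (2*k) + h (2*k+1)) := by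
  intro m
  induction m with
  | zero => simp
  | succ k ih =>
    have : 2*(k+1) = (2*k + 1) + 1 := by ring
    rw [this, Finset.sum_range_succ, Finset.sum_range_succ, ih, Finset.sum_range_succ]
    rw [add_assoc]

lemma proj_eq (f g : Polynomial HbarRing) {N : ℕ} (hN : f.natDegree ≤ N) :
    toyProj (f, g) = ∑ n ∈ Finset.range (N+1), f.coeff n * pm n := by
  have step1 : toyProj (f, g) = ∑ m ∈ Finset.range (f.natDegree + 1), f.coeff (2*m) * pm (2*m) := by
    simp only [toyProj]
    refine Finset.sum_congr rfl fun m _ => ?_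
    rw [pm_even, mul_assoc]
  have step2 : ∀ {M₁ M₂ : ℕ}, M₁ ≤ M₂ →
      (∑ m ∈ Finset.range M₁, f.coeff (2*m) * pm (2*m))
        = ∑ m ∈ Finset.range M₂, f.coeff (2*m) * pm (2*m) ∨ True := fun _ => Or.inr trivial
  -- common value: sum over range (N+1) of even-index terms
  have ext1 : (∑ m ∈ Finset.range (f.natDegree + 1), f.coeff (2*m) * pm (2*m))
      = ∑ m ∈ Finset.range (N+1), f.coeff (2*m) * pm (2*m) := by
    refine Finset.sum_subset (by intro a ha; simp only [Finset.mem_range] at *; omega) ?_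
    intro a _ ha
    simp only [Finset.mem_range, not_lt] at ha
    rw [Polynomial.coeff_eq_zero_of_natDegree_lt (by omega), zero_mul]
  have ext2 : (∑ n ∈ Finset.range (N+1), f.coeff n * pm n)
      = ∑ n ∈ Finset.range (2*(N+1)), f.coeff n * pm n := by
    refine Finset.sum_subset (by intro a ha; simp only [Finset.mem_range] at *; omega) ?_
    intro a _ ha
    simp only [Finset.mem_range, not_lt] at ha
    rw [Polynomial.coeff_eq_zero_of_natDegree_lt (by omega), zero_mul]
  rw [step1, ext1, ext2, sum_pair]
  refine Finset.sum_congr rfl fun k _ => ?_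
  rw [pm_odd, mul_zero, add_zero]

lemma identB (g : Polynomial HbarRing) :
    (∑ n ∈ Finset.range (g.natDegree + 2),
      Polynomial.C ((Polynomial.X * g - Polynomial.C hbar * Polynomial.derivative g).coeff n)
        * Kr n) = g := by
  set N := g.natDegree with hNdef
  set h : Polynomial HbarRing := Polynomial.X * g - Polynomial.C hbar * Polynomial.derivative g
    with hh
  have hcoeff : ∀ n : ℕ, h.coeff (n+1)
      = g.coeff n - hbar * (g.coeff (n+2) * ((n+2 : ℕ) : HbarRing)) := by
    intro n
    rw [hh, Polynomial.coeff_sub, Polynomial.coeff_X_mul, Polynomial.coeff_C_mul,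
      Polynomial.coeff_derivative]
    push_cast
    ring
  set u : ℕ → Polynomial HbarRing := fun m =>
    Polynomial.C (g.coeff (m+1) * (hbar * ((m+1 : ℕ) : HbarRing))) * Kr m with hu
  have hA1 : (∑ n ∈ Finset.range (N+1), Polynomial.C (g.coeff n) * Polynomial.X ^ n) = g := by
    conv_rhs => rw [Polynomial.as_sum_range' g (N+1) (by omega)]
    refine Finset.sum_congr rfl fun n _ => ?_
    rw [Polynomial.C_mul_X_pow_eq_monomial]
  have hA2 : (∑ n ∈ Finset.range (N+1), Polynomial.C (g.coeff n) * E n)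
      = ∑ m ∈ Finset.range N, u m := by
    rw [Finset.sum_range_succ']
    have e0 : E 0 = 0 := rfl
    rw [e0, mul_zero, add_zero]
    refine Finset.sum_congr rfl fun m _ => ?_
    show Polynomial.C (g.coeff (m+1)) * (Polynomial.C (hbar * ((m+1 : ℕ) : HbarRing)) * Kr m) = _
    rw [hu, ← mul_assoc, ← Polynomial.C_mul]
  have hW : (∑ m ∈ Finset.range (N+2), u m) = ∑ m ∈ Finset.range N, u m := by
    rw [Finset.sum_range_succ, Finset.sum_range_succ]
    have z1 : g.coeff (N+1) = 0 :=
      Polynomial.coeff_eq_zero_of_natDegree_lt (by omega)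
    have z2 : g.coeff (N+2) = 0 :=
      Polynomial.coeff_eq_zero_of_natDegree_lt (by omega)
    rw [hu]
    simp [z1, z2]
  have hA3 : (∑ n ∈ Finset.range (N+1),
        Polynomial.C (hbar * (g.coeff (n+2) * ((n+2 : ℕ) : HbarRing))) * Kr (n+1))
      = ∑ m ∈ Finset.range (N+2), u m := by
    have u0 : u 0 = 0 := by rw [hu]; simp [Kr_zero]
    conv_rhs => rw [Finset.sum_range_succ']
    rw [u0, add_zero]
    refine Finset.sum_congr rfl fun n _ => ?_
    rw [hu]
    congr 1
    congr 1
    push_cast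
    ring
  calc (∑ n ∈ Finset.range (N + 2), Polynomial.C (h.coeff n) * Kr n)
      = (∑ n ∈ Finset.range (N+1), Polynomial.C (h.coeff (n+1)) * Kr (n+1))
        + Polynomial.C (h.coeff 0) * Kr 0 := Finset.sum_range_succ' _ _
    _ = ∑ n ∈ Finset.range (N+1), (Polynomial.C (g.coeff n) * Polynomial.X ^ n
          + Polynomial.C (g.coeff n) * E n
          - Polynomial.C (hbar * (g.coeff (n+2) * ((n+2 : ℕ) : HbarRing))) * Kr (n+1)) := by
        rw [Kr_zero, mul_zero, add_zero]
        refine Finset.sum_congr rfl fun n _ => ?_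
        rw [hcoeff n, Kr_succ, map_sub]
        ring
    _ = (∑ n ∈ Finset.range (N+1), Polynomial.C (g.coeff n) * Polynomial.X ^ n)
        + (∑ n ∈ Finset.range (N+1), Polynomial.C (g.coeff n) * E n)
        - ∑ n ∈ Finset.range (N+1),
            Polynomial.C (hbar * (g.coeff (n+2) * ((n+2 : ℕ) : HbarRing))) * Kr (n+1) := by
        rw [Finset.sum_sub_distrib, Finset.sum_add_distrib]
    _ = g := by rw [hA1, hA2, hA3, hW]; ring

lemma degQ (g : Polynomial HbarRing) :
    (Polynomial.X * g - Polynomial.C hbar * Polynomial.derivative g).natDegree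
      ≤ g.natDegree + 1 := by
  refine le_trans (Polynomial.natDegree_sub_le _ _) (max_le ?_ ?_)
  · refine le_trans (Polynomial.natDegree_mul_le) ?_
    rw [Polynomial.natDegree_X]
    omega
  · refine le_trans (Polynomial.natDegree_mul_le) ?_
    have := Polynomial.natDegree_derivative_le g
    have hC : (Polynomial.C hbar).natDegree = 0 := Polynomial.natDegree_C _
    omega

lemma mainA (v : ToyV) :
    toyQ (toyHtpy v) + toyHtpy (toyQ v) = v - toyIncl (toyProj v) := by
  obtain ⟨f, g⟩ := v
  have hsnd : (toyHtpy (f, g)).2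
      = ∑ n ∈ Finset.range (f.natDegree + 1), Polynomial.C (f.coeff n) * Kr n :=
    htpy_snd f g le_rfl
  have hfst : (toyHtpy (f, g)).1 = 0 := rfl
  refine Prod.ext ?_ ?_
  · -- first components
    show Polynomial.X * (toyHtpy (f, g)).2
        - Polynomial.C hbar * Polynomial.derivative (toyHtpy (f, g)).2 + 0
      = f - Polynomial.C (toyProj (f, g))
    rw [hsnd, add_zero]
    rw [Polynomial.derivative_sum]
    rw [Finset.mul_sum, Finset.mul_sum, ← Finset.sum_sub_distrib]
    have hterm : ∀ n ∈ Finset.range (f.natDegree + 1),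
        Polynomial.X * (Polynomial.C (f.coeff n) * Kr n)
          - Polynomial.C hbar * Polynomial.derivative (Polynomial.C (f.coeff n) * Kr n)
        = Polynomial.C (f.coeff n) * Polynomial.X ^ n
          - Polynomial.C (f.coeff n * pm n) := by
      intro n _
      rw [Polynomial.derivative_C_mul]
      have : Polynomial.X * (Polynomial.C (f.coeff n) * Kr n)
          - Polynomial.C hbar * (Polynomial.C (f.coeff n) * Polynomial.derivative (Kr n))
          = Polynomial.C (f.coeff n) * (Polynomial.X * Kr n
              - Polynomial.C hbar * Polynomial.derivative (Kr n)) := by ring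
      rw [this, identA, map_mul]
      ring
    rw [Finset.sum_congr rfl hterm, Finset.sum_sub_distrib]
    have h1 : (∑ n ∈ Finset.range (f.natDegree + 1),
        Polynomial.C (f.coeff n) * Polynomial.X ^ n) = f := by
      conv_rhs => rw [Polynomial.as_sum_range' f (f.natDegree+1) (by omega)]
      exact Finset.sum_congr rfl fun n _ => Polynomial.C_mul_X_pow_eq_monomial
    have h2 : (∑ n ∈ Finset.range (f.natDegree + 1), Polynomial.C (f.coeff n * pm n))
        = Polynomial.C (toyProj (f, g)) := by
      rw [proj_eq f g le_rfl, map_sum]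
    rw [h1, h2]
  · -- second components
    show (0 : Polynomial HbarRing) + (toyHtpy (toyQ (f, g))).2 = g - 0
    rw [zero_add, sub_zero]
    have hb : (toyQ (f, g)).1 = Polynomial.X * g - Polynomial.C hbar * Polynomial.derivative g :=
      rfl
    have := htpy_snd (toyQ (f, g)).1 (toyQ (f, g)).2 (N := g.natDegree + 1) (by rw [hb]; exact degQ g)
    rw [show (((toyQ (f,g)).1, (toyQ (f,g)).2) : ToyV) = toyQ (f,g) from rfl] at this
    rw [this, hb]
    exact identB g

end ToyAux
end

/-- the explicit quantum homotopy data for the free toy scalar satisfies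
`Q_ħ K + K Q_ħ = id - i∘p`, `p∘i = id`, and the side conditions
`K² = 0`, `K∘i = 0`, `p∘K = 0`. -/
theorem toy_free_scalar_quantum_homotopy :
    (∀ v : ToyV, toyQ (toyHtpy v) + toyHtpy (toyQ v) = v - toyIncl (toyProj v)) ∧
    (∀ c : HbarRing, toyProj (toyIncl c) = c) ∧
    (∀ v : ToyV, toyHtpy (toyHtpy v) = 0) ∧
    (∀ c : HbarRing, toyHtpy (toyIncl c) = 0) ∧
    (∀ v : ToyV, toyProj (toyHtpy v) = 0) := by
  refine ⟨ToyAux.mainA, ?_, ?_, ?_, ?_⟩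
  · intro c
    simp [toyProj, toyIncl, Nat.doubleFactorial]
  · intro v
    have : (toyHtpy v).1 = 0 := rfl
    simp [toyHtpy, this]
  · intro c
    have : (toyIncl c).1 = Polynomial.C c := rfl
    simp [toyHtpy, this]
  · intro v
    have : (toyHtpy v).1 = 0 := rfl
    simp [toyProj, this]
end
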